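/- Let p be an odd prime, n ≥ 1, q = p^(2^n), and G = PGL₂(F_q). If x ∈ G is an involution not lying in the image of SL₂(F_q) in G, then the index of the centralizer of x in G, which equals the size of the conjugacy class of x, is q(q−1)/2. -/

import Mathlib

open Matrix

/-- `PGL₂(F)`: the projective general linear group, i.e. the quotient of `GL₂(F)`
by its center. -/
abbrev ProjectiveGL2 (F : Type) [Field F] : Type :=
  Matrix.GeneralLinearGroup (Fin 2) F ⧸ Subgroup.center (Matrix.GeneralLinearGroup (Fin 2) F)

/-- The image of the natural map `SL₂(F) → PGL₂(F)`: the socle of `PGL₂(F)`,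
isomorphic to `PSL₂(F)`. -/
def socleSL2 (F : Type) [Field F] : Subgroup (ProjectiveGL2 F) :=
  ((QuotientGroup.mk' (Subgroup.center (Matrix.GeneralLinearGroup (Fin 2) F))).comp
    Matrix.SpecialLinearGroup.toGL).range

namespace OuterInvAux

variable {F : Type} [Field F]

lemma scalar_fin_two (r : F) : (Matrix.scalar (Fin 2)) r = !![r, 0; 0, r] := by
  rw [eta_fin_two ((Matrix.scalar (Fin 2)) r)]
  simp [Matrix.scalar_apply, Matrix.diagonal_apply]

lemma trace_scalar_mul (r : F) (A : Matrix (Fin 2) (Fin 2) F) :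
    ((Matrix.scalar (Fin 2)) r * A).trace = r * A.trace := by
  rw [scalar_fin_two, eta_fin_two A, Matrix.mul_fin_two]
  simp [Matrix.trace_fin_two]; ring

lemma det_scalar_mul (r : F) (A : Matrix (Fin 2) (Fin 2) F) :
    ((Matrix.scalar (Fin 2)) r * A).det = r ^ 2 * A.det := by
  rw [scalar_fin_two, eta_fin_two A, Matrix.mul_fin_two]
  simp [Matrix.det_fin_two]; ring

lemma mul_scalar_comm (r : F) (A : Matrix (Fin 2) (Fin 2) F) :
    A * (Matrix.scalar (Fin 2)) r = (Matrix.scalar (Fin 2)) r * A :=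
  (Matrix.scalar_commute r (fun r' => mul_comm r r') A).eq.symm

/-- scalar unit in `GL₂`. -/
def scalarU (c : Fˣ) : GL (Fin 2) F := Units.map (Matrix.scalar (Fin 2)).toMonoidHom c

lemma val_scalarU (c : Fˣ) : (scalarU c).val = (Matrix.scalar (Fin 2)) (c : F) := rfl

lemma scalarU_mem_center (c : Fˣ) :
    scalarU c ∈ Subgroup.center (GL (Fin 2) F) := by
  rw [Subgroup.mem_center_iff]
  intro g
  refine Units.ext ?_
  simp only [Units.val_mul, val_scalarU]
  exact mul_scalar_comm (c : F) (g.val)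

lemma mem_center_iff'' {u : GL (Fin 2) F} :
    u ∈ Subgroup.center (GL (Fin 2) F) ↔ ∃ c : Fˣ, u = scalarU c := by
  constructor
  · intro hu
    have hcomm : ∀ t : TransvectionStruct (Fin 2) F, Commute t.toMatrix u.val := by
      intro t
      have ht : IsUnit t.toMatrix := by
        rw [Matrix.isUnit_iff_isUnit_det, t.det]; exact isUnit_one
      have := (Subgroup.mem_center_iff.mp hu) ht.unit
      have := congrArg Units.val this
      simpa [Units.val_mul, ht.unit_spec, Commute, SemiconjBy] using this
    obtain ⟨r, hr⟩ := Matrix.mem_range_scalar_of_commute_transvectionStruct hcomm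
    have hrunit : IsUnit r := by
      have h1 : u.inv * u.val = 1 := u.inv_val
      rw [← hr] at h1
      have := congrFun (congrFun h1 0) 0
      rw [scalar_fin_two] at this
      rw [eta_fin_two u.inv, Matrix.mul_fin_two] at this
      simp at this
      rw [mul_comm] at this
      exact IsUnit.of_mul_eq_one _ this
    refine ⟨hrunit.unit, ?_⟩
    refine Units.ext ?_
    rw [val_scalarU, hrunit.unit_spec, hr]
  · rintro ⟨c, rfl⟩
    exact scalarU_mem_center c

lemma isSquare_neg_iff (hneg : IsSquare (-1 : F)) (z : F) :
    IsSquare (-z) ↔ IsSquare z := by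
  obtain ⟨i, hi⟩ := hneg
  constructor
  · rintro ⟨t, ht⟩
    refine ⟨i * t, ?_⟩
    have : z = -(t * t) := by rw [← ht]; ring
    rw [this, show (i*t)*(i*t) = (i*i)*(t*t) by ring, ← hi]; ring
  · rintro ⟨t, ht⟩
    refine ⟨i * t, ?_⟩
    rw [show (i*t)*(i*t) = (i*i)*(t*t) by ring, ← hi, ← ht]; ring

lemma isSquare_sq_mul_iff {r : F} (hr : r ≠ 0) (d : F) :
    IsSquare (r ^ 2 * d) ↔ IsSquare d := by
  constructor
  · rintro ⟨t, ht⟩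
    refine ⟨t / r, ?_⟩
    field_simp
    linear_combination ht
  · rintro ⟨t, ht⟩
    exact ⟨r * t, by rw [ht]; ring⟩

lemma ne_zero_of_not_isSquare {a : F} (ha : ¬IsSquare a) : a ≠ 0 := by
  rintro rfl; exact ha ⟨0, by ring⟩

lemma isSquare_mul_of_not_of_not [Fintype F] {a b : F}
    (ha : ¬IsSquare a) (hb : ¬IsSquare b) : IsSquare (a * b) := by
  classical
  have hA := quadraticChar_neg_one_iff_not_isSquare.mpr ha
  have hB := quadraticChar_neg_one_iff_not_isSquare.mpr hb
  have hab : a * b ≠ 0 := mul_ne_zero (ne_zero_of_not_isSquare ha) (ne_zero_of_not_isSquare hb)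
  refine (quadraticChar_one_iff_isSquare hab).mp ?_
  rw [_root_.map_mul, hA, hB]; ring

lemma card_eq_two_mul_nonsquares [Fintype F] (hchar : ringChar F ≠ 2) :
    Fintype.card F = 2 * Nat.card {d : F // ¬IsSquare d} + 1 := by
  classical
  obtain ⟨u, hu⟩ := FiniteField.exists_nonsquare hchar
  have hu0 : u ≠ 0 := ne_zero_of_not_isSquare hu
  have hcardAB : (Finset.univ.filter (fun d : F => IsSquare d ∧ d ≠ 0)).card
      = (Finset.univ.filter (fun d : F => ¬IsSquare d)).card := by
    refine Finset.card_nbij' (fun a => u * a) (fun b => u⁻¹ * b) ?_ ?_ ?_ ?_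
    · intro a haA
      rw [Finset.mem_coe, Finset.mem_filter] at haA ⊢
      obtain ⟨_, ⟨s, hs⟩, ha0⟩ := haA
      refine ⟨Finset.mem_univ _, ?_⟩
      rintro ⟨t, ht⟩
      apply hu
      have hs0 : s ≠ 0 := by rintro rfl; exact ha0 (by rw [hs]; ring)
      refine ⟨t / s, ?_⟩
      field_simp
      have ht' : u * a = t * t := ht
      linear_combination ht' - u * hs
    · intro b hbB
      rw [Finset.mem_coe, Finset.mem_filter] at hbB ⊢
      obtain ⟨_, hbB⟩ := hbB
      have hb0 : b ≠ 0 := ne_zero_of_not_isSquare hbB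
      have hui : ¬IsSquare (u⁻¹) := by
        rintro ⟨t, ht⟩
        have ht0 : t ≠ 0 := by
          rintro rfl
          rw [mul_zero, inv_eq_zero] at ht
          exact hu0 ht
        exact hu ⟨t⁻¹, by rw [← inv_inv u, ht]; field_simp⟩
      exact ⟨Finset.mem_univ _,
        isSquare_mul_of_not_of_not hui hbB, mul_ne_zero (inv_ne_zero hu0) hb0⟩
    · intro a _; field_simp
    · intro b _; field_simp
  have hsplit : (Finset.univ.filter (fun d : F => IsSquare d)).card
      + (Finset.univ.filter (fun d : F => ¬IsSquare d)).card = Fintype.card F := by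
    rw [← Finset.card_univ (α := F)]
    exact Finset.card_filter_add_card_filter_not (fun d => IsSquare d)
  have hins : Finset.univ.filter (fun d : F => IsSquare d)
      = insert (0:F) (Finset.univ.filter (fun d : F => IsSquare d ∧ d ≠ 0)) := by
    ext d
    simp only [Finset.mem_filter, Finset.mem_univ, true_and, Finset.mem_insert]
    constructor
    · intro hd
      by_cases h0 : d = 0
      · exact Or.inl h0
      · exact Or.inr ⟨hd, h0⟩
    · rintro (rfl | ⟨hd, _⟩)
      · exact ⟨0, by ring⟩
      · exact hd
  have h0A : (0:F) ∉ Finset.univ.filter (fun d : F => IsSquare d ∧ d ≠ 0) := by simp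
  have hNB : Nat.card {d : F // ¬IsSquare d}
      = (Finset.univ.filter (fun d : F => ¬IsSquare d)).card := by
    rw [Nat.card_eq_fintype_card, Fintype.card_subtype]
  rw [hNB]
  rw [hins, Finset.card_insert_of_notMem h0A] at hsplit
  omega

lemma det_val_ne_zero (g : GL (Fin 2) F) : (g.val).det ≠ 0 :=
  ((Matrix.isUnit_iff_isUnit_det _).mp g.isUnit).ne_zero

lemma traceConjGL (h g : GL (Fin 2) F) : ((h * g * h⁻¹).val).trace = g.val.trace := by
  have h0 : (h * g * h⁻¹).val = h.val * g.val * (h⁻¹).val := by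
    rw [Units.val_mul, Units.val_mul]
  have h1 : (h⁻¹).val * h.val = 1 := by
    rw [← Units.val_mul, inv_mul_cancel, Units.val_one]
  rw [h0, Matrix.trace_mul_cycle, h1, one_mul]

lemma detConjGL (h g : GL (Fin 2) F) : ((h * g * h⁻¹).val).det = g.val.det := by
  have h0 : (h * g * h⁻¹).val = h.val * g.val * (h⁻¹).val := by
    rw [Units.val_mul, Units.val_mul]
  have h1 : (h⁻¹).val * h.val = 1 := by
    rw [← Units.val_mul, inv_mul_cancel, Units.val_one]
  have h2 : ((h⁻¹).val).det * (h.val).det = 1 := by rw [← det_mul, h1, det_one]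
  rw [h0, det_mul, det_mul]
  linear_combination (g.val).det * h2

/-- `k` is conjugate in `GL₂` to any unit whose matrix is the companion matrix
`!![0, -d; 1, 0]` of its characteristic polynomial, provided `trace k = 0`. -/
lemma isConj_companion (h2 : (2:F) ≠ 0) {d : F} (C : GL (Fin 2) F)
    (hC : C.val = !![0, -d; 1, 0]) (k : GL (Fin 2) F)
    (hk : k.val.trace = 0) (hkd : k.val.det = d) : IsConj C k := by
  have h11 : k.val 1 1 = -(k.val 0 0) := by
    rw [trace_fin_two] at hk; linear_combination hk
  have hd' : d = -(k.val 0 0 * k.val 0 0) - k.val 0 1 * k.val 1 0 := by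
    rw [← hkd, det_fin_two, h11]; ring
  have key : ∃ P : Matrix (Fin 2) (Fin 2) F, P.det ≠ 0 ∧ k.val * P = P * !![0, -d; 1, 0] := by
    by_cases hc : k.val 1 0 ≠ 0
    · refine ⟨!![1, k.val 0 0; 0, k.val 1 0], ?_, ?_⟩
      · rw [det_fin_two_of]; simpa using hc
      · rw [eta_fin_two k.val, h11, hd', Matrix.mul_fin_two, Matrix.mul_fin_two]
        ext i j; fin_cases i <;> fin_cases j <;> simp <;> ring
    · push_neg at hc
      by_cases hb : k.val 0 1 ≠ 0
      · refine ⟨!![0, k.val 0 1; 1, -(k.val 0 0)], ?_, ?_⟩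
        · rw [det_fin_two_of]; simpa using hb
        · rw [eta_fin_two k.val, h11, hd', Matrix.mul_fin_two, Matrix.mul_fin_two]
          ext i j; fin_cases i <;> fin_cases j <;> simp [hc] <;> ring
      · push_neg at hb
        have ha : k.val 0 0 ≠ 0 := by
          intro h0
          apply det_val_ne_zero k
          rw [det_fin_two, h11, h0, hb]; ring
        refine ⟨!![1, k.val 0 0; 1, -(k.val 0 0)], ?_, ?_⟩
        · rw [det_fin_two_of]
          intro h0
          apply ha
          have h2a : (2:F) * k.val 0 0 ≠ 0 := fun hh => ha (by
            rcases mul_eq_zero.mp hh with h | h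
            · exact absurd h h2
            · exact h)
          exact absurd (by linear_combination -h0) h2a
        · rw [eta_fin_two k.val, h11, hd', Matrix.mul_fin_two, Matrix.mul_fin_two]
          ext i j; fin_cases i <;> fin_cases j <;> simp [hb, hc] <;> ring
  obtain ⟨P, hPd, hPe⟩ := key
  have hPu : IsUnit P := (Matrix.isUnit_iff_isUnit_det P).mpr (isUnit_iff_ne_zero.mpr hPd)
  have hmul : k * hPu.unit = hPu.unit * C := by
    refine Units.ext ?_
    rw [Units.val_mul, Units.val_mul, hPu.unit_spec, hC]
    exact hPe
  rw [isConj_iff]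
  refine ⟨hPu.unit, ?_⟩
  rw [← hmul, mul_assoc, mul_inv_cancel, mul_one]

lemma mem_socle_of_isSquare_det (g : GL (Fin 2) F) (hs : IsSquare (g.val.det)) :
    QuotientGroup.mk' (Subgroup.center (GL (Fin 2) F)) g ∈ socleSL2 F := by
  obtain ⟨s, hsq⟩ := hs
  have hdet0 := det_val_ne_zero g
  have hs0 : s ≠ 0 := by rintro rfl; rw [hsq] at hdet0; simp at hdet0
  have hdetS : ((Matrix.scalar (Fin 2)) s⁻¹ * g.val).det = 1 := by
    rw [det_scalar_mul, hsq]; field_simp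
  rw [socleSL2, MonoidHom.mem_range]
  refine ⟨(⟨(Matrix.scalar (Fin 2)) s⁻¹ * g.val, hdetS⟩ : Matrix.SpecialLinearGroup (Fin 2) F), ?_⟩
  show QuotientGroup.mk' (Subgroup.center (GL (Fin 2) F)) (Matrix.SpecialLinearGroup.toGL
    (⟨(Matrix.scalar (Fin 2)) s⁻¹ * g.val, hdetS⟩ : Matrix.SpecialLinearGroup (Fin 2) F)) = _
  rw [QuotientGroup.mk'_eq_mk']
  refine ⟨scalarU (Units.mk0 s hs0), scalarU_mem_center _, ?_⟩
  refine Units.ext ?_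
  rw [Units.val_mul, val_scalarU]
  show ((Matrix.scalar (Fin 2)) s⁻¹ * g.val) * (Matrix.scalar (Fin 2)) s = g.val
  rw [mul_scalar_comm, ← mul_assoc, ← _root_.map_mul]
  rw [mul_inv_cancel₀ hs0]
  simp

lemma trace_eq_zero_of_sq_central (g : GL (Fin 2) F)
    (hgc : g ∉ Subgroup.center (GL (Fin 2) F))
    (hg2 : g * g ∈ Subgroup.center (GL (Fin 2) F)) : g.val.trace = 0 := by
  obtain ⟨c, hc⟩ := mem_center_iff''.mp hg2
  have hval : g.val * g.val = (Matrix.scalar (Fin 2)) (c:F) := by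
    have := congrArg Units.val hc
    rw [Units.val_mul] at this
    exact this
  have e := hval
  rw [eta_fin_two g.val, Matrix.mul_fin_two, scalar_fin_two] at e
  have e00 : g.val 0 0 * g.val 0 0 + g.val 0 1 * g.val 1 0 = (c:F) := by
    have := congrFun (congrFun e 0) 0; simpa using this
  have e01 : g.val 0 0 * g.val 0 1 + g.val 0 1 * g.val 1 1 = 0 := by
    have := congrFun (congrFun e 0) 1; simpa using this
  have e10 : g.val 1 0 * g.val 0 0 + g.val 1 1 * g.val 1 0 = 0 := by
    have := congrFun (congrFun e 1) 0; simpa using this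
  have e11 : g.val 1 0 * g.val 0 1 + g.val 1 1 * g.val 1 1 = (c:F) := by
    have := congrFun (congrFun e 1) 1; simpa using this
  by_contra htr
  rw [Matrix.trace_fin_two] at htr
  have hb : g.val 0 1 = 0 := by
    rcases mul_eq_zero.mp (show g.val 0 1 * (g.val 0 0 + g.val 1 1) = 0 by
      linear_combination e01) with h | h
    · exact h
    · exact absurd h htr
  have hcq : g.val 1 0 = 0 := by
    rcases mul_eq_zero.mp (show g.val 1 0 * (g.val 0 0 + g.val 1 1) = 0 by
      linear_combination e10) with h | h
    · exact h
    · exact absurd h htr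
  have had : g.val 0 0 = g.val 1 1 := by
    have hsq : (g.val 0 0 - g.val 1 1) * (g.val 0 0 + g.val 1 1) = 0 := by
      linear_combination e00 - e11 + (g.val 1 0) * hb - (g.val 0 1) * hcq
    rcases mul_eq_zero.mp hsq with h | h
    · exact sub_eq_zero.mp h
    · exact absurd h htr
  apply hgc
  rw [mem_center_iff'']
  have haunit : IsUnit (g.val 0 0) := by
    rw [isUnit_iff_ne_zero]
    intro h0
    apply det_val_ne_zero g
    rw [det_fin_two, ← had, h0, hb]; ring
  refine ⟨haunit.unit, Units.ext ?_⟩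
  rw [val_scalarU, haunit.unit_spec, scalar_fin_two]
  conv_lhs => rw [eta_fin_two g.val]
  rw [hb, hcq, ← had]

end OuterInvAux

open OuterInvAux in
/-- The index of the centralizer of an outer involution of `PGL₂(q)` — equivalently
the size of its conjugacy class — is `q(q-1)/2`. -/
theorem index_centralizer_outer_involution (p n : ℕ) (hp : Nat.Prime p) (hodd : Odd p) (hn : 1 ≤ n)
    (F : Type) [Field F] [Fintype F] (hF : Fintype.card F = p ^ 2 ^ n)
    (x : ProjectiveGL2 F) (hx : orderOf x = 2) (hxS : x ∉ socleSL2 F) :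
    (Subgroup.centralizer {x}).index = p ^ 2 ^ n * (p ^ 2 ^ n - 1) / 2 ∧
    {y : ProjectiveGL2 F | IsConj x y}.ncard = p ^ 2 ^ n * (p ^ 2 ^ n - 1) / 2 := by
  classical
  -- characteristic facts
  have hcharp : ringChar F = p := by
    obtain ⟨k, hkp, hcard⟩ := FiniteField.card F (ringChar F)
    have hdvd : p ∣ ringChar F ^ (k:ℕ) := by
      rw [← hcard, hF]
      exact dvd_pow_self p (by positivity)
    exact ((Nat.prime_dvd_prime_iff_eq hp hkp).mp (hp.dvd_of_dvd_pow hdvd)).symm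
  haveI : CharP F p := hcharp ▸ ringChar.charP F
  have hp2 : p ≠ 2 := by rintro rfl; rw [Nat.odd_iff] at hodd; omega
  have h2 : (2:F) ≠ 0 := by
    intro h
    have h' : ((2:ℕ) : F) = 0 := by exact_mod_cast h
    have := (CharP.cast_eq_zero_iff F p 2).mp h'
    exact hp2 ((Nat.prime_dvd_prime_iff_eq hp Nat.prime_two).mp this)
  have hchar2 : ringChar F ≠ 2 := by rw [hcharp]; exact hp2
  have hneg1 : IsSquare (-1 : F) := by
    rw [FiniteField.isSquare_neg_one_iff, hF]
    have hm : p ^ (2^n) = (p ^ (2^(n-1)))^2 := by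
      rw [← pow_mul]
      congr 1
      rw [← pow_succ]
      congr 1
      omega
    obtain ⟨t, ht⟩ := (hodd.pow : Odd (p ^ (2^(n-1))))
    rw [hm, ht, show (2*t+1)^2 = 4*(t*t+t) + 1 by ring]
    omega
  -- nonsquare count
  set N := Nat.card {d : F // ¬IsSquare d} with hNdef
  have hcardN : Fintype.card F = 2*N+1 := card_eq_two_mul_nonsquares hchar2
  have hNpos : 0 < N := by
    obtain ⟨u, hu⟩ := FiniteField.exists_nonsquare (F:=F) hchar2
    have : Nonempty {d : F // ¬IsSquare d} := ⟨⟨u, hu⟩⟩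
    exact Nat.card_pos
  -- count of trace-zero matrices with nonsquare determinant
  have hmatcount : Nat.card {M : Matrix (Fin 2) (Fin 2) F // M.trace = 0 ∧ ¬IsSquare M.det}
      = Fintype.card F * ((Fintype.card F - 1) * N) := by
    have hkey : ∀ M : Matrix (Fin 2) (Fin 2) F, M.trace = 0 → ¬IsSquare M.det →
        ¬IsSquare (M 0 0 ^ 2 + M 0 1 * M 1 0) ∧ M 0 1 ≠ 0 := by
      intro M htr hdet
      have h11 : M 1 1 = -(M 0 0) := by
        rw [trace_fin_two] at htr; linear_combination htr
      have hEq : M 0 0 ^ 2 + M 0 1 * M 1 0 = -(M.det) := by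
        rw [det_fin_two, h11]; ring
      have hns : ¬IsSquare (M 0 0 ^ 2 + M 0 1 * M 1 0) := by
        rw [hEq]
        intro hsq
        exact hdet ((isSquare_neg_iff hneg1 M.det).mp hsq)
      refine ⟨hns, ?_⟩
      intro h0
      exact hns (by rw [h0, zero_mul, add_zero]; exact ⟨M 0 0, sq (M 0 0) ▸ (sq (M 0 0)).symm ▸ by ring⟩)
    let E : {M : Matrix (Fin 2) (Fin 2) F // M.trace = 0 ∧ ¬IsSquare M.det}
        ≃ F × {b : F // b ≠ 0} × {d : F // ¬IsSquare d} :=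
      { toFun := fun M => (M.val 0 0, ⟨M.val 0 1, (hkey M.val M.prop.1 M.prop.2).2⟩,
          ⟨M.val 0 0 ^ 2 + M.val 0 1 * M.val 1 0, (hkey M.val M.prop.1 M.prop.2).1⟩)
        invFun := fun z => ⟨!![z.1, z.2.1.val; (z.2.2.val - z.1^2)/z.2.1.val, -z.1], by
          constructor
          · rw [trace_fin_two]; simp
          · have hdet : (!![z.1, z.2.1.val; (z.2.2.val - z.1^2)/z.2.1.val, -z.1] :
                Matrix (Fin 2) (Fin 2) F).det = -(z.2.2.val) := by
              rw [det_fin_two_of, mul_comm (z.2.1.val), div_mul_cancel₀ _ z.2.1.prop]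
              ring
            rw [hdet]
            intro hsq
            exact z.2.2.prop ((isSquare_neg_iff hneg1 _).mp hsq)⟩
        left_inv := by
          rintro ⟨M, hM⟩
          have hb := (hkey M hM.1 hM.2).2
          have h11 : M 1 1 = -(M 0 0) := by
            have := hM.1
            rw [trace_fin_two] at this; linear_combination this
          refine Subtype.ext ?_
          ext i j
          fin_cases i <;> fin_cases j
          · simp
          · simp
          · simp
            field_simp
          · simp [h11]
        right_inv := by
          rintro ⟨a, ⟨b, hb⟩, ⟨d, hd⟩⟩
          refine Prod.ext rfl (Prod.ext (Subtype.ext rfl) (Subtype.ext ?_))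
          show a ^ 2 + b * ((d - a^2)/b) = d
          rw [mul_comm, div_mul_cancel₀ _ hb]
          ring }
    rw [Nat.card_congr E, Nat.card_prod, Nat.card_prod]
    have h1 : Nat.card F = Fintype.card F := Nat.card_eq_fintype_card
    have h2' : Nat.card {b : F // b ≠ 0} = Fintype.card F - 1 := by
      rw [← Nat.card_congr (unitsEquivNeZero (G₀ := F)), Nat.card_eq_fintype_card,
        Fintype.card_units]
    rw [h1, h2']
  -- transfer to `GL₂`
  have hGLcount : Nat.card {g : GL (Fin 2) F // g.val.trace = 0 ∧ ¬IsSquare g.val.det}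
      = Nat.card {M : Matrix (Fin 2) (Fin 2) F // M.trace = 0 ∧ ¬IsSquare M.det} := by
    refine Nat.card_congr (Equiv.ofBijective (fun g => ⟨g.val.val, g.prop⟩) ⟨?_, ?_⟩)
    · rintro ⟨g, hg⟩ ⟨g', hg'⟩ h
      simp only [Subtype.mk.injEq] at h ⊢
      exact Units.ext h
    · rintro ⟨M, hM⟩
      have hMu : IsUnit M := (Matrix.isUnit_iff_isUnit_det M).mpr
        (isUnit_iff_ne_zero.mpr (ne_zero_of_not_isSquare hM.2))
      refine ⟨⟨hMu.unit, ?_⟩, ?_⟩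
      · rw [hMu.unit_spec]; exact hM
      · exact Subtype.ext hMu.unit_spec
  -- an involution lift
  set pr := QuotientGroup.mk' (Subgroup.center (GL (Fin 2) F)) with hprdef
  obtain ⟨g₀, hg₀⟩ := QuotientGroup.mk'_surjective (Subgroup.center (GL (Fin 2) F)) x
  have hx1 : x ≠ 1 := by
    intro h; rw [h, orderOf_one] at hx; omega
  have hxx : x * x = 1 := by
    have := pow_orderOf_eq_one x
    rw [hx, pow_two] at this
    exact this
  have hg₀c : g₀ ∉ Subgroup.center (GL (Fin 2) F) := by
    intro hc
    apply hx1
    rw [← hg₀]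
    exact (QuotientGroup.eq_one_iff g₀).mpr hc
  have hg₀2 : g₀ * g₀ ∈ Subgroup.center (GL (Fin 2) F) := by
    have hpr1 : pr (g₀ * g₀) = 1 := by rw [_root_.map_mul, hg₀, hxx]
    exact (QuotientGroup.eq_one_iff (g₀ * g₀)).mp hpr1
  have htr₀ : g₀.val.trace = 0 := trace_eq_zero_of_sq_central g₀ hg₀c hg₀2
  have hdet₀ : ¬IsSquare g₀.val.det := by
    intro hs
    exact hxS (hg₀ ▸ mem_socle_of_isSquare_det g₀ hs)
  have hprs : ∀ c : Fˣ, pr (scalarU c) = 1 :=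
    fun c => (QuotientGroup.eq_one_iff _).mpr (scalarU_mem_center c)
  -- every trace-zero nonsquare-det unit maps into the conjugacy class of x
  have claim1 : ∀ g : GL (Fin 2) F, g.val.trace = 0 → ¬IsSquare g.val.det → IsConj x (pr g) := by
    intro g hg hdg
    obtain ⟨s, hs⟩ := isSquare_mul_of_not_of_not hdg hdet₀
    have hs0 : s ≠ 0 := by
      intro h0
      have hne := mul_ne_zero (det_val_ne_zero g) (det_val_ne_zero g₀)
      rw [hs, h0, mul_zero] at hne
      exact hne rfl
    have hlam0 : s * (g₀.val.det)⁻¹ ≠ 0 := mul_ne_zero hs0 (inv_ne_zero (det_val_ne_zero g₀))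
    set g₁ := scalarU (Units.mk0 _ hlam0) * g₀ with hg₁
    have hg₁v : g₁.val = (Matrix.scalar (Fin 2)) (s * (g₀.val.det)⁻¹) * g₀.val := by
      rw [hg₁, Units.val_mul, val_scalarU]; rfl
    have htr₁ : g₁.val.trace = 0 := by rw [hg₁v, trace_scalar_mul, htr₀, mul_zero]
    have hdet₁ : g₁.val.det = g.val.det := by
      rw [hg₁v, det_scalar_mul]
      have hd₀ := det_val_ne_zero g₀
      calc (s * (g₀.val.det)⁻¹)^2 * g₀.val.det
          = (s*s) * ((g₀.val.det)⁻¹ * ((g₀.val.det)⁻¹ * g₀.val.det)) := by ring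
        _ = (s*s) * (g₀.val.det)⁻¹ := by rw [inv_mul_cancel₀ hd₀, mul_one]
        _ = (g.val.det * g₀.val.det) * (g₀.val.det)⁻¹ := by rw [hs]
        _ = g.val.det * (g₀.val.det * (g₀.val.det)⁻¹) := by ring
        _ = g.val.det := by rw [mul_inv_cancel₀ hd₀, mul_one]
    have hconj : IsConj g₁ g := by
      have hdne : g.val.det ≠ 0 := det_val_ne_zero g
      have hCu : IsUnit (!![0, -(g.val.det); 1, 0]) := by
        rw [Matrix.isUnit_iff_isUnit_det, det_fin_two_of]
        simpa using isUnit_iff_ne_zero.mpr hdne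
      have h₁ := isConj_companion h2 hCu.unit hCu.unit_spec g₁ htr₁ (by rw [hdet₁])
      have h₂ := isConj_companion h2 hCu.unit hCu.unit_spec g hg rfl
      exact h₁.symm.trans h₂
    have hpr1 : pr g₁ = x := by
      rw [hg₁, _root_.map_mul, hprs, hg₀, one_mul]
    rw [← hpr1]
    exact pr.map_isConj hconj
  have claim2 : ∀ y : ProjectiveGL2 F, IsConj x y →
      ∃ g : GL (Fin 2) F, (g.val.trace = 0 ∧ ¬IsSquare g.val.det) ∧ pr g = y := by
    intro y hy
    obtain ⟨t, ht⟩ := isConj_iff.mp hy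
    obtain ⟨h₀, hh₀⟩ := QuotientGroup.mk'_surjective (Subgroup.center (GL (Fin 2) F)) t
    refine ⟨h₀ * g₀ * h₀⁻¹, ⟨?_, ?_⟩, ?_⟩
    · rw [traceConjGL]; exact htr₀
    · rw [detConjGL]; exact hdet₀
    · rw [_root_.map_mul, _root_.map_mul, _root_.map_inv, hh₀, hg₀]; exact ht
  -- the fibration over the conjugacy class
  set Cl : Set (ProjectiveGL2 F) := {y | IsConj x y} with hCl
  have hfinGL : Finite (GL (Fin 2) F) := inferInstance
  have hfinP : Finite (ProjectiveGL2 F) :=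
    Finite.of_surjective _ (QuotientGroup.mk'_surjective (Subgroup.center (GL (Fin 2) F)))
  let Φ : {g : GL (Fin 2) F // g.val.trace = 0 ∧ ¬IsSquare g.val.det} → Cl :=
    fun g => ⟨pr g.val, claim1 g.val g.prop.1 g.prop.2⟩
  have hsurj : Function.Surjective Φ := by
    rintro ⟨y, hy⟩
    obtain ⟨g, hg, hgy⟩ := claim2 y hy
    exact ⟨⟨g, hg⟩, Subtype.ext hgy⟩
  have hfiber : ∀ y : Cl, Nat.card {s : {g : GL (Fin 2) F //
      g.val.trace = 0 ∧ ¬IsSquare g.val.det} // Φ s = y} = Fintype.card F - 1 := by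
    intro y
    obtain ⟨s₀, hs₀⟩ := hsurj y
    have hprs₀ : pr s₀.val = y.val := congrArg Subtype.val hs₀
    let e : Fˣ → {s : {g : GL (Fin 2) F //
        g.val.trace = 0 ∧ ¬IsSquare g.val.det} // Φ s = y} := fun μ =>
      ⟨⟨s₀.val * scalarU μ, by
        constructor
        · rw [Units.val_mul, val_scalarU, mul_scalar_comm, trace_scalar_mul, s₀.prop.1, mul_zero]
        · rw [Units.val_mul, val_scalarU, mul_scalar_comm, det_scalar_mul]
          intro hsq
          exact s₀.prop.2 ((isSquare_sq_mul_iff (Units.ne_zero μ) _).mp hsq)⟩, by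
        refine Subtype.ext ?_
        show pr (s₀.val * scalarU μ) = y.val
        rw [_root_.map_mul, hprs, mul_one, hprs₀]⟩
    have hinj : Function.Injective e := by
      intro μ μ' h
      have h1 : s₀.val * scalarU μ = s₀.val * scalarU μ' := congrArg (fun z => z.val.val) h
      have h2' := mul_left_cancel h1
      have h3 := congrArg Units.val h2'
      rw [val_scalarU, val_scalarU, scalar_fin_two, scalar_fin_two] at h3
      have := congrFun (congrFun h3 0) 0
      simp at this
      exact Units.ext this
    have hsurj' : Function.Surjective e := by
      rintro ⟨⟨s, hsprop⟩, hfib⟩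
      have hfib' : pr s = y.val := congrArg Subtype.val hfib
      have : pr s₀.val = pr s := by rw [hprs₀, hfib']
      obtain ⟨z, hz, hmulz⟩ := (QuotientGroup.mk'_eq_mk' (Subgroup.center (GL (Fin 2) F))).mp this
      obtain ⟨μ, rfl⟩ := mem_center_iff''.mp hz
      exact ⟨μ, Subtype.ext (Subtype.ext hmulz)⟩
    rw [← Nat.card_congr (Equiv.ofBijective e ⟨hinj, hsurj'⟩), Nat.card_eq_fintype_card,
      Fintype.card_units]
  have hsigma : Nat.card {g : GL (Fin 2) F // g.val.trace = 0 ∧ ¬IsSquare g.val.det}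
      = Nat.card Cl * (Fintype.card F - 1) := by
    letI : Fintype Cl := Fintype.ofFinite _
    letI : Fintype {g : GL (Fin 2) F // g.val.trace = 0 ∧ ¬IsSquare g.val.det} :=
      Fintype.ofFinite _
    letI : ∀ y : Cl, Fintype {s : {g : GL (Fin 2) F //
        g.val.trace = 0 ∧ ¬IsSquare g.val.det} // Φ s = y} := fun y => Fintype.ofFinite _
    rw [← Nat.card_congr (Equiv.sigmaFiberEquiv Φ)]
    rw [Nat.card_eq_fintype_card, Fintype.card_sigma]
    have hconst : ∀ y : Cl, Fintype.card {s : {g : GL (Fin 2) F //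
        g.val.trace = 0 ∧ ¬IsSquare g.val.det} // Φ s = y} = Fintype.card F - 1 := by
      intro y
      rw [← Nat.card_eq_fintype_card]
      exact hfiber y
    rw [Finset.sum_congr rfl (fun y _ => hconst y), Finset.sum_const, smul_eq_mul,
      Finset.card_univ, ← Nat.card_eq_fintype_card (α := Cl)]
  -- put the counts together
  have hmain : Nat.card Cl * (2*N) = (2*N+1) * ((2*N) * N) := by
    have h' := hsigma.symm.trans (hGLcount.trans hmatcount)
    rw [hcardN] at h'
    have hsub : 2*N+1-1 = 2*N := by omega
    rw [hsub] at h'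
    exact h'
  have hClcard : Nat.card Cl = (2*N+1) * N := by
    have h2N : 0 < 2*N := by omega
    apply Nat.eq_of_mul_eq_mul_right h2N
    rw [hmain]; ring
  have htarget : p ^ 2 ^ n * (p ^ 2 ^ n - 1) / 2 = (2*N+1) * N := by
    rw [← hF, hcardN]
    rw [show 2*N+1-1 = 2*N by omega, show (2*N+1)*(2*N) = ((2*N+1)*N)*2 by ring,
      Nat.mul_div_cancel _ (by norm_num)]
  have hncard : Cl.ncard = (2*N+1) * N := by
    rw [← Nat.card_coe_set_eq, hClcard]
  have horb : MulAction.orbit (ConjAct (ProjectiveGL2 F)) x = Cl := by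
    ext y
    rw [ConjAct.mem_orbit_conjAct, hCl, Set.mem_setOf_eq, isConj_comm]
  constructor
  · rw [Subgroup.centralizer_eq_comap_stabilizer]
    exact (Subgroup.index_comap_of_surjective (MulAction.stabilizer (ConjAct (ProjectiveGL2 F)) x)
      (f := ConjAct.toConjAct.toMonoidHom) (MulEquiv.surjective _)).trans
      (by rw [MulAction.index_stabilizer, horb, hncard, htarget])
  · rw [hncard, htarget]
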